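/- Let E be a real normed vector space and E' a real Banach space, ε > 0 and 0 ≤ p < 1. Suppose f : E → E' satisfies ‖f(x+y) − f(x) − f(y)‖ ≤ ε(‖x‖^p + ‖y‖^p) for all x, y ∈ E, and moreover that for each fixed x ∈ E the map t ↦ f(tx) from ℝ to E' is continuous. Then the unique additive mapping T : E → E' satisfying ‖f(x) − T(x)‖ ≤ (2ε/(2 − 2^p))‖x‖^p for all x ∈ E is ℝ-linear, i.e. T(tx) = tT(x) for all t ∈ ℝ and x ∈ E. -/

import Mathlib

open Filter Topology

/-- Rassias' stability theorem, linearity part: if moreover `t ↦ f(tx)` is continuous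
for each fixed `x`, then the unique additive map `T` with
`‖f(x) − T(x)‖ ≤ 2ε/(2 − 2^p)·‖x‖^p` is `ℝ`-linear. -/
theorem rassias_stability_linear
    {E E' : Type*} [NormedAddCommGroup E] [NormedSpace ℝ E]
    [NormedAddCommGroup E'] [NormedSpace ℝ E'] [CompleteSpace E']
    (ε p : ℝ) (hε : 0 < ε) (hp0 : 0 ≤ p) (hp1 : p < 1)
    (f : E → E')
    (hf : ∀ x y : E, ‖f (x + y) - f x - f y‖ ≤ ε * (‖x‖ ^ p + ‖y‖ ^ p))
    (hcont : ∀ x : E, Continuous fun t : ℝ => f (t • x)) :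
    ∃ T : E → E',
      ((∀ x y : E, T (x + y) = T x + T y) ∧
        (∀ x : E, ‖f x - T x‖ ≤ 2 * ε / (2 - 2 ^ p) * ‖x‖ ^ p) ∧
        (∀ (t : ℝ) (x : E), T (t • x) = t • T x)) ∧
      (∀ T' : E → E',
        ((∀ x y : E, T' (x + y) = T' x + T' y) ∧
          (∀ x : E, ‖f x - T' x‖ ≤ 2 * ε / (2 - 2 ^ p) * ‖x‖ ^ p)) → T' = T) := by
  -- Basic numerical facts
  have h2p_pos : (0:ℝ) < 2 ^ p := Real.rpow_pos_of_pos two_pos p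
  have h2p_lt : (2:ℝ) ^ p < 2 := by
    have : (2:ℝ) ^ p < 2 ^ (1:ℝ) :=
      (Real.rpow_lt_rpow_left_iff (by norm_num : (1:ℝ) < 2)).mpr hp1
    simpa using this
  set r : ℝ := 2 ^ p / 2 with hr_def
  have hr0 : 0 < r := by positivity
  have hr1 : r < 1 := by rw [hr_def]; linarith
  have h1r : 0 < 1 - r := by linarith
  have h2sub : (0:ℝ) < 2 - 2 ^ p := by linarith
  -- the approximating sequence
  set u : ℕ → E → E' := fun n x => ((2:ℝ)^n)⁻¹ • f (((2:ℝ)^n) • x) with hu_def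
  have hrn : ∀ n : ℕ, r ^ n = ((2:ℝ)^p)^n / 2^n := by
    intro n; rw [hr_def, div_pow]
  have hnorm_pow : ∀ (x : E) (n : ℕ), ‖((2:ℝ)^n) • x‖ ^ p = ((2:ℝ)^p)^n * ‖x‖^p := by
    intro x n
    rw [norm_smul, Real.norm_eq_abs, abs_of_pos (by positivity),
      Real.mul_rpow (by positivity) (norm_nonneg _)]
    congr 1
    rw [← Real.rpow_natCast (2:ℝ) n, ← Real.rpow_natCast ((2:ℝ)^p) n,
      ← Real.rpow_mul (by norm_num : (0:ℝ) ≤ 2),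
      ← Real.rpow_mul (by norm_num : (0:ℝ) ≤ 2), mul_comm]
  -- one-step estimate
  have step : ∀ y : E, ‖(2:ℝ)⁻¹ • f ((2:ℝ) • y) - f y‖ ≤ ε * ‖y‖ ^ p := by
    intro y
    have h := hf y y
    rw [show y + y = (2:ℝ) • y from (two_smul ℝ y).symm] at h
    have e : (2:ℝ)⁻¹ • f ((2:ℝ) • y) - f y
        = (2:ℝ)⁻¹ • (f ((2:ℝ) • y) - f y - f y) := by module
    rw [e, norm_smul, Real.norm_eq_abs]
    have : |(2:ℝ)⁻¹| = (2:ℝ)⁻¹ := abs_of_pos (by norm_num)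
    rw [this]
    calc (2:ℝ)⁻¹ * ‖f ((2:ℝ) • y) - f y - f y‖
        ≤ (2:ℝ)⁻¹ * (ε * (‖y‖^p + ‖y‖^p)) := by gcongr
      _ = ε * ‖y‖ ^ p := by ring
  -- distance between consecutive terms
  have hdist : ∀ (x : E) (n : ℕ),
      dist (u n x) (u (n+1) x) ≤ (ε * ‖x‖^p) * r ^ n := by
    intro x n
    set y := ((2:ℝ)^n) • x with hy
    have e3 : ((2:ℝ)^n * 2) • x = (2:ℝ) • y := by
      rw [mul_comm, mul_smul, hy]
    have e2 : u (n+1) x - u n x = ((2:ℝ)^n)⁻¹ • ((2:ℝ)⁻¹ • f ((2:ℝ) • y) - f y) := by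
      simp only [hu_def, pow_succ, e3, mul_inv, smul_sub, smul_smul, hy]
    rw [dist_eq_norm, ← norm_neg, neg_sub, e2, norm_smul, Real.norm_eq_abs,
      abs_of_pos (by positivity : (0:ℝ) < ((2:ℝ)^n)⁻¹)]
    calc ((2:ℝ)^n)⁻¹ * ‖(2:ℝ)⁻¹ • f ((2:ℝ) • y) - f y‖
        ≤ ((2:ℝ)^n)⁻¹ * (ε * ‖y‖ ^ p) := by gcongr; exact step y
      _ = (ε * ‖x‖^p) * r ^ n := by
          rw [hy, hnorm_pow, hrn]; field_simp
  have hcauchy : ∀ x : E, CauchySeq fun n => u n x := fun x =>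
    cauchySeq_of_le_geometric r _ hr1 (hdist x)
  choose T hT using fun x : E => cauchySeq_tendsto_of_complete (hcauchy x)
  -- uniform-in-n distance estimate
  have hdistn : ∀ (x : E) (n : ℕ),
      dist (u n x) (T x) ≤ (ε * ‖x‖^p) * r ^ n / (1 - r) :=
    fun x n => dist_le_of_le_geometric_of_tendsto r _ hr1 (hdist x) (hT x) n
  -- approximation bound
  have hCeq : ∀ x : E, (ε * ‖x‖^p) / (1 - r) = 2 * ε / (2 - 2 ^ p) * ‖x‖ ^ p := by
    intro x
    rw [hr_def]
    field_simp
  have hTbound : ∀ x : E, ‖f x - T x‖ ≤ 2 * ε / (2 - 2 ^ p) * ‖x‖ ^ p := by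
    intro x
    have h0 := dist_le_of_le_geometric_of_tendsto₀ r _ hr1 (hdist x) (hT x)
    have hu0 : u 0 x = f x := by simp [hu_def]
    rw [hu0, dist_eq_norm] at h0
    calc ‖f x - T x‖ ≤ (ε * ‖x‖^p) / (1 - r) := h0
      _ = 2 * ε / (2 - 2 ^ p) * ‖x‖ ^ p := hCeq x
  -- additivity
  have hTadd : ∀ x y : E, T (x + y) = T x + T y := by
    intro x y
    have h1 : Tendsto (fun n => u n (x+y) - u n x - u n y) atTop
        (𝓝 (T (x+y) - T x - T y)) := ((hT (x+y)).sub (hT x)).sub (hT y)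
    have h2 : Tendsto (fun n => u n (x+y) - u n x - u n y) atTop (𝓝 0) := by
      apply squeeze_zero_norm (a := fun n => (ε * (‖x‖^p + ‖y‖^p)) * r ^ n)
      · intro n
        have e : u n (x+y) - u n x - u n y
            = ((2:ℝ)^n)⁻¹ • (f (((2:ℝ)^n) • x + ((2:ℝ)^n) • y)
                - f (((2:ℝ)^n) • x) - f (((2:ℝ)^n) • y)) := by
          simp only [hu_def, smul_add, smul_sub]
        rw [e, norm_smul, Real.norm_eq_abs,
          abs_of_pos (by positivity : (0:ℝ) < ((2:ℝ)^n)⁻¹)]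
        calc ((2:ℝ)^n)⁻¹ * ‖f (((2:ℝ)^n) • x + ((2:ℝ)^n) • y)
              - f (((2:ℝ)^n) • x) - f (((2:ℝ)^n) • y)‖
            ≤ ((2:ℝ)^n)⁻¹ * (ε * (‖((2:ℝ)^n) • x‖^p + ‖((2:ℝ)^n) • y‖^p)) := by
              gcongr; exact hf _ _
          _ = (ε * (‖x‖^p + ‖y‖^p)) * r ^ n := by
              rw [hnorm_pow, hnorm_pow, hrn]; field_simp
      · simpa using (tendsto_pow_atTop_nhds_zero_of_lt_one hr0.le hr1).const_mul
          (ε * (‖x‖^p + ‖y‖^p))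
    have := tendsto_nhds_unique h1 h2
    have h3 : T (x+y) - T x - T y = 0 := this
    have := sub_eq_zero.mp h3
    linear_combination (norm := abel) this
  -- 2^n homogeneity of additive maps
  have pow_eq : ∀ (S : E → E'), (∀ a b : E, S (a+b) = S a + S b) →
      ∀ (n : ℕ) (z : E), S (((2:ℝ)^n) • z) = ((2:ℝ)^n) • S z := by
    intro S hS n
    induction n with
    | zero => intro z; simp
    | succ n ih =>
      intro z
      have h2 : ∀ w : E, S ((2:ℝ) • w) = (2:ℝ) • S w := by
        intro w; rw [two_smul, hS, two_smul]
      calc S (((2:ℝ)^(n+1)) • z) = S (((2:ℝ)^n) • ((2:ℝ) • z)) := by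
            rw [← mul_smul, ← pow_succ]
        _ = ((2:ℝ)^n) • S ((2:ℝ) • z) := ih _
        _ = ((2:ℝ)^n) • ((2:ℝ) • S z) := by rw [h2]
        _ = ((2:ℝ)^(n+1)) • S z := by rw [← mul_smul, ← pow_succ]
  -- real homogeneity
  have hTsmul : ∀ (t : ℝ) (x : E), T (t • x) = t • T x := by
    intro t x
    -- continuity of each approximation in t
    have hucont : ∀ n : ℕ, Continuous fun s : ℝ => u n (s • x) := by
      intro n
      have e : (fun s : ℝ => u n (s • x))
          = fun s : ℝ => ((2:ℝ)^n)⁻¹ • f (((2:ℝ)^n * s) • x) := by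
        funext s; simp only [hu_def, smul_smul]
      rw [e]
      exact ((hcont x).comp (continuous_const.mul continuous_id)).const_smul _
    -- locally uniform convergence
    have hunif : ∀ R : ℝ, TendstoUniformlyOn (fun n (s : ℝ) => u n (s • x))
        (fun s => T (s • x)) atTop (Metric.closedBall 0 R) := by
      intro R
      rw [Metric.tendstoUniformlyOn_iff]
      intro δ hδ
      have hR : Tendsto (fun n : ℕ => ε * (|R|^p * ‖x‖^p) * r ^ n / (1 - r))
          atTop (𝓝 0) := by
        have h := ((tendsto_pow_atTop_nhds_zero_of_lt_one hr0.le hr1).const_mul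
          (ε * (|R|^p * ‖x‖^p))).div_const (1 - r)
        simpa using h
      filter_upwards [hR.eventually (gt_mem_nhds hδ)] with n hn s hs
      have hsR : |s| ≤ |R| := by
        have : dist s 0 ≤ R := Metric.mem_closedBall.mp hs
        rw [Real.dist_eq, sub_zero] at this
        exact this.trans (le_abs_self R)
      have h2 : ‖s • x‖ ^ p ≤ |R|^p * ‖x‖^p := by
        rw [norm_smul, Real.norm_eq_abs,
          Real.mul_rpow (abs_nonneg _) (norm_nonneg _)]
        exact mul_le_mul_of_nonneg_right (Real.rpow_le_rpow (abs_nonneg _) hsR hp0)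
          (Real.rpow_nonneg (norm_nonneg _) p)
      calc dist (T (s • x)) (u n (s • x)) = dist (u n (s • x)) (T (s • x)) :=
            dist_comm _ _
        _ ≤ (ε * ‖s • x‖^p) * r ^ n / (1 - r) := hdistn _ n
        _ ≤ ε * (|R|^p * ‖x‖^p) * r ^ n / (1 - r) := by gcongr
        _ < δ := hn
    -- continuity of t ↦ T (t • x)
    have hφcont : Continuous fun s : ℝ => T (s • x) := by
      rw [continuous_iff_continuousAt]
      intro t₀
      have h := (hunif (|t₀| + 1)).continuousOn
        (Frequently.of_forall fun n => (hucont n).continuousOn)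
      refine h.continuousAt (Metric.closedBall_mem_nhds_of_mem ?_)
      rw [Metric.mem_ball, Real.dist_eq, sub_zero]
      linarith
    -- additivity in t
    have hφadd : ∀ s w : ℝ, T ((s + w) • x) = T (s • x) + T (w • x) := by
      intro s w; rw [add_smul, hTadd]
    -- rational homogeneity
    have hφq : ∀ q : ℚ, T ((q:ℝ) • x) = (q:ℝ) • T ((1:ℝ) • x) := by
      intro q
      have h := map_ratCast_smul (AddMonoidHom.mk' (fun s : ℝ => T (s • x))
        (fun s w => hφadd s w)) ℝ ℝ q (1:ℝ)
      simpa using h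
    have hext : (fun s : ℝ => T (s • x)) = fun s : ℝ => s • T ((1:ℝ) • x) := by
      refine Continuous.ext_on Rat.denseRange_cast hφcont
        (continuous_id.smul continuous_const) ?_
      rintro _ ⟨q, rfl⟩
      exact hφq q
    have h := congrFun hext t
    simpa using h
  -- uniqueness
  refine ⟨T, ⟨hTadd, hTbound, hTsmul⟩, ?_⟩
  rintro T' ⟨hT'add, hT'b⟩
  funext x
  have hb : ∀ n : ℕ, ‖T' x - T x‖
      ≤ (2 * (2 * ε / (2 - 2 ^ p)) * ‖x‖^p) * r ^ n := by
    intro n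
    set y := ((2:ℝ)^n) • x with hy
    have e : T' x - T x = ((2:ℝ)^n)⁻¹ • (T' y - T y) := by
      rw [hy, pow_eq T' hT'add n x, pow_eq T hTadd n x, smul_sub, smul_smul,
        smul_smul, inv_mul_cancel₀ (by positivity : ((2:ℝ)^n) ≠ 0), one_smul, one_smul]
    have h1 : ‖T' y - T y‖ ≤ 2 * (2 * ε / (2 - 2 ^ p)) * ‖y‖^p := by
      calc ‖T' y - T y‖ = ‖(f y - T y) - (f y - T' y)‖ := by congr 1; abel
        _ ≤ ‖f y - T y‖ + ‖f y - T' y‖ := norm_sub_le _ _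
        _ ≤ 2 * ε / (2 - 2 ^ p) * ‖y‖^p + 2 * ε / (2 - 2 ^ p) * ‖y‖^p :=
            add_le_add (hTbound y) (hT'b y)
        _ = 2 * (2 * ε / (2 - 2 ^ p)) * ‖y‖^p := by ring
    rw [e, norm_smul, Real.norm_eq_abs,
      abs_of_pos (by positivity : (0:ℝ) < ((2:ℝ)^n)⁻¹)]
    calc ((2:ℝ)^n)⁻¹ * ‖T' y - T y‖
        ≤ ((2:ℝ)^n)⁻¹ * (2 * (2 * ε / (2 - 2 ^ p)) * ‖y‖^p) := by gcongr
      _ = (2 * (2 * ε / (2 - 2 ^ p)) * ‖x‖^p) * r ^ n := by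
          rw [hy, hnorm_pow, hrn]; field_simp
  have h0 : Tendsto (fun n : ℕ => (2 * (2 * ε / (2 - 2 ^ p)) * ‖x‖^p) * r ^ n)
      atTop (𝓝 0) := by
    simpa using (tendsto_pow_atTop_nhds_zero_of_lt_one hr0.le hr1).const_mul
      (2 * (2 * ε / (2 - 2 ^ p)) * ‖x‖^p)
  have hle : ‖T' x - T x‖ ≤ 0 := ge_of_tendsto' h0 hb
  have := norm_le_zero_iff.mp hle
  exact sub_eq_zero.mp this
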